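/- arXiv:1310.3689 — 3 statements merged into one kernel-verified Lean document; each statement's English description precedes it below -/
import Mathlib

section
/- For every function u in the weighted Sobolev space H^1_c(ℝ) = H^1(ℝ, e^{cz}dz) with c > 0, the Poincaré-type inequality (c²/4) ∫_ℝ e^{cz} u(z)² dz ≤ ∫_ℝ e^{cz} u'(z)² dz holds. -/
open MeasureTheory Real Filter

lemma lim_zero_atTop_aux {F : ℝ → ℝ} (hF : Integrable F) {L : ℝ}
    (h : Tendsto F atTop (nhds L)) : L = 0 := by
  by_contra hL
  have hpos : 0 < |L| / 2 := by positivity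
  have hev : ∀ᶠ x in atTop, |L| / 2 ≤ |F x| := by
    filter_upwards [Metric.tendsto_nhds.mp h (|L| / 2) hpos] with x hx
    rw [Real.dist_eq] at hx
    have := abs_sub_abs_le_abs_sub L (F x)
    rw [abs_sub_comm] at this
    linarith
  obtain ⟨a, ha⟩ := hev.exists_forall_of_atTop
  have hint : IntegrableOn F (Set.Ioi a) := hF.integrableOn
  have hconst : IntegrableOn (fun _ : ℝ => |L| / 2) (Set.Ioi a) := by
    refine Integrable.mono hint aestronglyMeasurable_const ?_
    refine (ae_restrict_iff' measurableSet_Ioi).mpr (ae_of_all _ fun x hx => ?_)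
    rw [Real.norm_eq_abs, Real.norm_eq_abs, abs_of_nonneg (by positivity : (0:ℝ) ≤ |L| / 2)]
    exact ha x hx.le
  rw [IntegrableOn, integrable_const_iff] at hconst
  rcases hconst with h0 | hfin
  · exact hL (by simpa using h0)
  · have hfin := hfin.measure_univ_lt_top
    simp [Measure.restrict_apply, Real.volume_Ioi] at hfin

lemma lim_zero_atBot_aux {F : ℝ → ℝ} (hF : Integrable F) {L : ℝ}
    (h : Tendsto F atBot (nhds L)) : L = 0 := by
  have : Tendsto (fun x => F (-x)) atTop (nhds L) := h.comp tendsto_neg_atTop_atBot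
  exact lim_zero_atTop_aux (by simpa using hF.comp_neg) this

/-- Poincaré-type inequality in the weighted space `H^1_c(ℝ) = H^1(ℝ, e^{cz}dz)`:
for `c > 0`, `(c²/4) ∫ e^{cz} u² ≤ ∫ e^{cz} u'²`. -/
theorem poincare_weighted (c : ℝ) (hc : 0 < c) (u u' : ℝ → ℝ)
    (hderiv : ∀ z, HasDerivAt u (u' z) z)
    (hu : Integrable (fun z => exp (c * z) * (u z) ^ 2))
    (hu' : Integrable (fun z => exp (c * z) * (u' z) ^ 2)) :
    c ^ 2 / 4 * ∫ z, exp (c * z) * (u z) ^ 2 ≤ ∫ z, exp (c * z) * (u' z) ^ 2 := by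
  set F : ℝ → ℝ := fun z => exp (c * z) * (u z) ^ 2 with hFdef
  set F' : ℝ → ℝ := fun z => c * exp (c * z) * (u z) ^ 2 + exp (c * z) * (2 * u z * u' z)
    with hF'def
  -- measurability facts
  have hu_cont : Continuous u := by
    have : Differentiable ℝ u := fun z => (hderiv z).differentiableAt
    exact this.continuous
  have hu'_meas : AEStronglyMeasurable u' volume := by
    have : u' = deriv u := funext fun z => ((hderiv z).deriv).symm
    rw [this]
    exact (measurable_deriv u).aestronglyMeasurable
  have hFderiv : ∀ z, HasDerivAt F (F' z) z := by
    intro z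
    have h1 : HasDerivAt (fun z => exp (c * z)) (c * exp (c * z)) z := by
      simpa [mul_comm] using ((hasDerivAt_id z).const_mul c).exp
    have h2 : HasDerivAt (fun z => (u z) ^ 2) (2 * u z * u' z) z := by
      simpa [mul_comm, mul_assoc] using (hderiv z).fun_pow 2
    simpa [hFdef, hF'def, mul_comm, mul_assoc] using h1.fun_mul h2
  -- integrability of the cross term
  have hcross : Integrable (fun z => exp (c * z) * (u z * u' z)) := by
    have hmeas : AEStronglyMeasurable (fun z => exp (c * z) * (u z * u' z)) volume :=
      ((Real.continuous_exp.comp (continuous_const.mul continuous_id)).aestronglyMeasurable.mul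
        (hu_cont.aestronglyMeasurable.mul hu'_meas))
    refine Integrable.mono' ((hu.add hu').const_mul (1/2 : ℝ)) hmeas (ae_of_all _ fun z => ?_)
    have he : 0 < exp (c * z) := exp_pos _
    rw [Real.norm_eq_abs, abs_mul, abs_of_pos he]
    have h1 : |u z * u' z| ≤ ((u z) ^ 2 + (u' z) ^ 2) / 2 := by
      rw [abs_mul]
      nlinarith [sq_nonneg (|u z| - |u' z|), sq_abs (u z), sq_abs (u' z)]
    calc exp (c * z) * |u z * u' z| ≤ exp (c * z) * (((u z) ^ 2 + (u' z) ^ 2) / 2) := by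
          exact mul_le_mul_of_nonneg_left h1 he.le
      _ = 1/2 * (exp (c * z) * (u z) ^ 2 + exp (c * z) * (u' z) ^ 2) := by ring
  have hF'int : Integrable F' := by
    have := (hu.const_mul c).add ((hcross.const_mul 2))
    refine this.congr (ae_of_all _ fun z => ?_)
    simp only [Pi.add_apply, hF'def]; ring
  -- F tends to limits at ±∞ and they are 0
  have htop : Tendsto F atTop (nhds (F 0 + ∫ z in Set.Ioi (0:ℝ), F' z)) := by
    have h1 : Tendsto (fun x => ∫ z in (0:ℝ)..x, F' z) atTop
        (nhds (∫ z in Set.Ioi (0:ℝ), F' z)) :=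
      intervalIntegral_tendsto_integral_Ioi 0 hF'int.integrableOn tendsto_id
    have h2 : ∀ x : ℝ, F x = F 0 + ∫ z in (0:ℝ)..x, F' z := by
      intro x
      rw [intervalIntegral.integral_eq_sub_of_hasDerivAt
        (fun z _ => hFderiv z) hF'int.intervalIntegrable]
      ring
    exact (tendsto_congr h2).mpr (tendsto_const_nhds.add h1)
  have hbot : Tendsto F atBot (nhds (F 0 - ∫ z in Set.Iic (0:ℝ), F' z)) := by
    have h1 : Tendsto (fun x => ∫ z in x..(0:ℝ), F' z) atBot
        (nhds (∫ z in Set.Iic (0:ℝ), F' z)) :=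
      intervalIntegral_tendsto_integral_Iic 0 hF'int.integrableOn tendsto_id
    have h2 : ∀ x : ℝ, F x = F 0 - ∫ z in x..(0:ℝ), F' z := by
      intro x
      rw [intervalIntegral.integral_eq_sub_of_hasDerivAt
        (fun z _ => hFderiv z) hF'int.intervalIntegrable]
      ring
    exact (tendsto_congr h2).mpr (tendsto_const_nhds.sub h1)
  have hLtop := lim_zero_atTop_aux hu htop
  have hLbot := lim_zero_atBot_aux hu hbot
  -- ∫ F' = 0
  have hsplit : ∫ z, F' z = (∫ z in Set.Iic (0:ℝ), F' z) + ∫ z in Set.Ioi (0:ℝ), F' z := by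
    rw [← setIntegral_union (Set.Iic_disjoint_Ioi le_rfl) measurableSet_Ioi
      hF'int.integrableOn hF'int.integrableOn, Set.Iic_union_Ioi,
      Measure.restrict_univ]
  have hF'zero : ∫ z, F' z = 0 := by
    rw [hsplit]
    have e1 : ∫ z in Set.Ioi (0:ℝ), F' z = -F 0 := by linarith [hLtop]
    have e2 : ∫ z in Set.Iic (0:ℝ), F' z = F 0 := by linarith [hLbot]
    rw [e1, e2]; ring
  -- relation: c I + 2 J = 0
  set I := ∫ z, exp (c * z) * (u z) ^ 2 with hI
  set K := ∫ z, exp (c * z) * (u' z) ^ 2 with hK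
  set J := ∫ z, exp (c * z) * (u z * u' z) with hJ
  have hrel : c * I + 2 * J = 0 := by
    have e : (∫ z, F' z) = c * I + 2 * J := by
      calc (∫ z, F' z)
          = ∫ z, (c * (exp (c*z) * (u z)^2) + 2 * (exp (c*z) * (u z * u' z))) := by
            congr 1; funext z; simp only [hF'def]; ring
        _ = (∫ z, c * (exp (c*z) * (u z)^2)) + ∫ z, 2 * (exp (c*z) * (u z * u' z)) :=
            integral_add (hu.const_mul c) (hcross.const_mul 2)
        _ = c * I + 2 * J := by simp only [integral_const_mul, hI, hJ]
    linarith [hF'zero, e]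
  -- nonnegativity: 0 ≤ ∫ e^{cz} ((c/2)u + u')^2 = c^2/4 I + c J + K
  have hnn : 0 ≤ c ^ 2 / 4 * I + c * J + K := by
    have hexp : 0 ≤ ∫ z, exp (c * z) * (c / 2 * u z + u' z) ^ 2 :=
      integral_nonneg fun z => mul_nonneg (exp_pos _).le (sq_nonneg _)
    have heq : (∫ z, exp (c * z) * (c / 2 * u z + u' z) ^ 2)
        = c ^ 2 / 4 * I + c * J + K := by
      calc (∫ z, exp (c * z) * (c / 2 * u z + u' z) ^ 2)
          = ∫ z, ((c^2/4 * (exp (c*z) * (u z)^2) + c * (exp (c*z) * (u z * u' z)))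
              + exp (c*z) * (u' z)^2) := by
            congr 1; funext z; ring
        _ = (∫ z, (c^2/4 * (exp (c*z) * (u z)^2) + c * (exp (c*z) * (u z * u' z))))
              + ∫ z, exp (c*z) * (u' z)^2 :=
            integral_add ((hu.const_mul _).add (hcross.const_mul _)) hu'
        _ = ((∫ z, c^2/4 * (exp (c*z) * (u z)^2)) + ∫ z, c * (exp (c*z) * (u z * u' z)))
              + ∫ z, exp (c*z) * (u' z)^2 := by
            rw [integral_add (hu.const_mul _) (hcross.const_mul _)]
        _ = c^2/4 * I + c * J + K := by simp only [integral_const_mul, hI, hJ, hK]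
    linarith [heq ▸ hexp]
  -- conclude
  have : J = -(c / 2) * I := by linarith
  nlinarith [hnn, hrel, sq_nonneg c]
end

section
/- Under the assumptions of the previous energy bound, any minimizing sequence of E_c over H^1_c(ℝ) consisting of functions with values in [0,M] is eventually bounded in the H^1_c(ℝ) norm: there exist N ∈ ℕ and C₁ > 0 such that for all n > N, ‖u_n‖²_{H^1_c} ≤ (1+C₁)/min{1/2, δ/2}. -/
open MeasureTheory Real

/-- Membership in the weighted Sobolev space `H^1_c(ℝ)`, given a global derivative `u'`. -/
def MemH1c (c : ℝ) (u u' : ℝ → ℝ) : Prop :=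
  (∀ z, HasDerivAt u (u' z) z) ∧
  Integrable (fun z => exp (c * z) * (u z) ^ 2) ∧
  Integrable (fun z => exp (c * z) * (u' z) ^ 2)

/-- The energy functional `E_c[u] = ∫ e^{cz}(u'²/2 − F(z,u))`, `F(z,s) = ∫₀^s f(z,t)dt`. -/
noncomputable def Ener (c : ℝ) (f : ℝ → ℝ → ℝ) (u u' : ℝ → ℝ) : ℝ :=
  ∫ z, exp (c * z) * ((u' z) ^ 2 / 2 - ∫ t in (0:ℝ)..(u z), f z t)

/-- Integrability of the energy integrand. -/
def EnerInt (c : ℝ) (f : ℝ → ℝ → ℝ) (u u' : ℝ → ℝ) : Prop :=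
  Integrable (fun z => exp (c * z) * ((u' z) ^ 2 / 2 - ∫ t in (0:ℝ)..(u z), f z t))

/-- Upper bound `F(z,s) ≤ L s²/2 ≤ L M²/2` from the Lipschitz property. -/
lemma F_upper (f : ℝ → ℝ → ℝ) (L : NNReal) (z s M : ℝ)
    (hf0 : ∀ z, f z 0 = 0) (hL : ∀ z, LipschitzWith L (f z))
    (hs0 : 0 ≤ s) (hsM : s ≤ M) :
    (∫ t in (0:ℝ)..s, f z t) ≤ (L : ℝ) * M ^ 2 / 2 := by
  have hcont : Continuous (f z) := (hL z).continuous
  have h1 : (∫ t in (0:ℝ)..s, f z t) ≤ ∫ t in (0:ℝ)..s, (L : ℝ) * t := by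
    refine intervalIntegral.integral_mono_on hs0 (hcont.intervalIntegrable _ _)
      ((continuous_const.mul continuous_id).intervalIntegrable _ _) ?_
    intro t ht
    have := (hL z).dist_le_mul t 0
    rw [Real.dist_eq, Real.dist_eq, hf0 z, sub_zero, sub_zero] at this
    have htnn : 0 ≤ t := ht.1
    calc f z t ≤ |f z t| := le_abs_self _
      _ ≤ (L : ℝ) * |t| := this
      _ = (L : ℝ) * t := by rw [abs_of_nonneg htnn]
  have h2 : (∫ t in (0:ℝ)..s, (L : ℝ) * t) = (L : ℝ) * s ^ 2 / 2 := by
    rw [intervalIntegral.integral_const_mul, integral_id]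
    ring
  have h3 : s ^ 2 ≤ M ^ 2 := by nlinarith
  have hLnn : (0:ℝ) ≤ L := L.coe_nonneg
  nlinarith [h1]

/-- For `|z| > R`, `F(z,s) ≤ -δ s²/2`. -/
lemma F_away (f : ℝ → ℝ → ℝ) (L : NNReal) (z s M δ R : ℝ)
    (hf0 : ∀ z, f z 0 = 0) (hL : ∀ z, LipschitzWith L (f z))
    (hfav : ∀ z s, R < |z| → 0 < s → s < M → f z s ≤ -δ * s)
    (hz : R < |z|) (hs0 : 0 ≤ s) (hsM : s ≤ M) :
    (∫ t in (0:ℝ)..s, f z t) ≤ -(δ * s ^ 2 / 2) := by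
  have hcont : Continuous (f z) := (hL z).continuous
  have h1 : (∫ t in (0:ℝ)..s, f z t) ≤ ∫ t in (0:ℝ)..s, -δ * t := by
    refine intervalIntegral.integral_mono_ae_restrict hs0 (hcont.intervalIntegrable _ _)
      ((continuous_const.mul continuous_id).intervalIntegrable _ _) ?_
    have hne : ∀ᵐ t ∂(volume : Measure ℝ), t ≠ M := by
      rw [ae_iff]
      simpa using measure_singleton (μ := (volume : Measure ℝ)) M
    have hmem := ae_restrict_mem (μ := (volume : Measure ℝ)) (measurableSet_Icc (a := (0:ℝ)) (b := s))
    filter_upwards [ae_restrict_of_ae hne, hmem] with t htne htmem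
    rcases eq_or_lt_of_le htmem.1 with h0 | h0
    · simp [← h0, hf0 z]
    · have htM : t < M := lt_of_le_of_ne (le_trans htmem.2 hsM) htne
      exact hfav z t hz h0 htM
  have h2 : (∫ t in (0:ℝ)..s, -δ * t) = -δ * s ^ 2 / 2 := by
    rw [intervalIntegral.integral_const_mul, integral_id]
    ring
  linarith [h1, h2.le, h2.ge]

/-- Any minimizing sequence of `E_c` consisting of functions with values in `[0,M]`
is eventually bounded in the `H^1_c` norm by `(1+C₁)/min{1/2, δ/2}`. -/
theorem minimizing_sequence_bounded (c M δ R : ℝ) (hc : 0 < c) (hM : 0 < M)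
    (hδ : 0 < δ) (hR : 0 < R) (f : ℝ → ℝ → ℝ)
    (hf0 : ∀ z, f z 0 = 0)
    (hflip : ∃ L : NNReal, ∀ z, LipschitzWith L (f z))
    (hfneg : ∀ z s, s ≤ 0 ∨ M ≤ s → f z s ≤ 0)
    (hfav : ∀ z s, R < |z| → 0 < s → s < M → f z s ≤ -δ * s)
    (u : ℕ → ℝ → ℝ) (u' : ℕ → ℝ → ℝ)
    (hmem : ∀ n, MemH1c c (u n) (u' n))
    (hint : ∀ n, EnerInt c f (u n) (u' n))
    (hrange : ∀ n z, 0 ≤ u n z ∧ u n z ≤ M)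
    (hmin : Filter.Tendsto (fun n => Ener c f (u n) (u' n)) Filter.atTop
      (nhds (sInf {e : ℝ | ∃ v v' : ℝ → ℝ, MemH1c c v v' ∧ EnerInt c f v v' ∧
        e = Ener c f v v'}))) :
    ∃ N : ℕ, ∃ C₁ : ℝ, 0 < C₁ ∧ ∀ n > N,
      (∫ z, exp (c * z) * ((u' n z) ^ 2 + (u n z) ^ 2))
        ≤ (1 + C₁) / min (1/2) (δ/2) := by
  obtain ⟨L, hL⟩ := hflip
  set S : Set ℝ := {e : ℝ | ∃ v v' : ℝ → ℝ, MemH1c c v v' ∧ EnerInt c f v v' ∧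
      e = Ener c f v v'} with hS_def
  set m : ℝ := min (1/2 : ℝ) (δ/2) with hm_def
  have hm : 0 < m := lt_min (by norm_num) (by positivity)
  set K : ℝ := (L : ℝ) * M ^ 2 / 2 + δ * M ^ 2 / 2 with hK_def
  have hLnn : (0:ℝ) ≤ L := L.coe_nonneg
  have hKpos : 0 < K := by positivity
  -- the weight integral over [-R, R]
  have hexpInt : IntegrableOn (fun z => exp (c * z)) (Set.Icc (-R) R) volume :=
    ((continuous_exp.comp (continuous_const.mul continuous_id)).continuousOn).integrableOn_compact
      isCompact_Icc
  set J : ℝ := ∫ z in Set.Icc (-R) R, exp (c * z) with hJ_def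
  have hJpos : 0 < J := by
    have hlow : (∫ z in Set.Icc (-R) R, exp (c * (-R))) ≤ J := by
      refine setIntegral_mono_on (integrableOn_const ?_) hexpInt measurableSet_Icc ?_
      · rw [Real.volume_Icc]; exact ENNReal.ofReal_ne_top
      · intro x hx
        exact exp_le_exp.2 (mul_le_mul_of_nonneg_left hx.1 hc.le)
    have : (∫ z in Set.Icc (-R) R, exp (c * (-R))) = (2 * R) * exp (c * (-R)) := by
      rw [setIntegral_const, measureReal_def, Real.volume_Icc, smul_eq_mul,
        ENNReal.toReal_ofReal (by linarith)]
      ring_nf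
    rw [this] at hlow
    have : 0 < (2 * R) * exp (c * (-R)) := by positivity
    linarith
  -- 0 belongs to S
  have h0S : (0:ℝ) ∈ S := by
    refine ⟨fun _ => 0, fun _ => 0, ⟨fun z => hasDerivAt_const z 0, ?_, ?_⟩, ?_, ?_⟩
    · simpa using (integrable_zero ℝ ℝ (volume : Measure ℝ))
    · simpa using (integrable_zero ℝ ℝ (volume : Measure ℝ))
    · unfold EnerInt
      simpa using (integrable_zero ℝ ℝ (volume : Measure ℝ))
    · unfold Ener
      simp
  have hsInf_le : sInf S ≤ 0 := by
    by_cases hbdd : BddBelow S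
    · exact csInf_le hbdd h0S
    · rw [Real.sInf_of_not_bddBelow hbdd]
  -- eventually the energy is below sInf S + 1
  have hev : ∀ᶠ n in Filter.atTop, Ener c f (u n) (u' n) < sInf S + 1 :=
    hmin.eventually_lt_const (lt_add_one _)
  obtain ⟨N, hN⟩ := Filter.eventually_atTop.mp hev
  refine ⟨N, K * J, mul_pos hKpos hJpos, ?_⟩
  intro n hn
  have hEn : Ener c f (u n) (u' n) < 1 := lt_of_lt_of_le (hN n hn.le) (by linarith)
  -- integrability of the comparison function
  have hI1 : Integrable (fun z => exp (c * z) * ((u' n z) ^ 2 + (u n z) ^ 2)) := by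
    have := (hmem n).2.2.add (hmem n).2.1
    simpa [mul_add, Pi.add_def] using this
  have hIind : Integrable ((Set.Icc (-R) R).indicator (fun z => K * exp (c * z))) := by
    rw [integrable_indicator_iff measurableSet_Icc]
    exact hexpInt.const_mul K
  have hg : Integrable (fun z => m * (exp (c * z) * ((u' n z) ^ 2 + (u n z) ^ 2))
      - (Set.Icc (-R) R).indicator (fun z => K * exp (c * z)) z) :=
    (hI1.const_mul m).sub hIind
  -- pointwise inequality
  have hle : ∀ z, m * (exp (c * z) * ((u' n z) ^ 2 + (u n z) ^ 2))
      - (Set.Icc (-R) R).indicator (fun z => K * exp (c * z)) z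
      ≤ exp (c * z) * ((u' n z) ^ 2 / 2 - ∫ t in (0:ℝ)..(u n z), f z t) := by
    intro z
    set a := u' n z
    set b := u n z
    set e := exp (c * z) with he_def
    have hepos : 0 < e := exp_pos _
    have hb0 : 0 ≤ b := (hrange n z).1
    have hbM : b ≤ M := (hrange n z).2
    have hbsq : b ^ 2 ≤ M ^ 2 := by nlinarith
    have hma : m * a ^ 2 ≤ a ^ 2 / 2 := by
      have := min_le_left (1/2 : ℝ) (δ/2)
      nlinarith [sq_nonneg a]
    have hmb : m * b ^ 2 ≤ δ / 2 * b ^ 2 := by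
      have := min_le_right (1/2 : ℝ) (δ/2)
      nlinarith [sq_nonneg b]
    by_cases hz : z ∈ Set.Icc (-R) R
    · rw [Set.indicator_of_mem hz]
      have hF := F_upper f L z b M hf0 hL hb0 hbM
      have hkey : m * (a ^ 2 + b ^ 2) - K ≤ a ^ 2 / 2 - ∫ t in (0:ℝ)..b, f z t := by
        have : δ / 2 * b ^ 2 ≤ δ / 2 * M ^ 2 :=
          mul_le_mul_of_nonneg_left hbsq (by positivity)
        rw [hK_def]
        linarith
      have h5 := mul_le_mul_of_nonneg_left hkey hepos.le
      have h6 : m * (e * (a ^ 2 + b ^ 2)) - K * e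
          = e * (m * (a ^ 2 + b ^ 2) - K) := by ring
      linarith
    · rw [Set.indicator_of_notMem hz, sub_zero]
      have hzR : R < |z| := by
        rw [Set.mem_Icc] at hz
        push_neg at hz
        rcases le_or_gt (-R) z with h | h
        · exact lt_of_lt_of_le (hz h) (le_abs_self z)
        · have h2 : R < -z := by linarith
          exact lt_of_lt_of_le h2 (neg_le_abs z)
      have hF := F_away f L z b M δ R hf0 hL hfav hzR hb0 hbM
      have hkey : m * (a ^ 2 + b ^ 2) ≤ a ^ 2 / 2 - ∫ t in (0:ℝ)..b, f z t := by
        linarith [hF, hma, hmb]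
      have h5 := mul_le_mul_of_nonneg_left hkey hepos.le
      have h6 : m * (e * (a ^ 2 + b ^ 2)) = e * (m * (a ^ 2 + b ^ 2)) := by ring
      linarith
  -- integrate the pointwise inequality
  have hmono : (∫ z, (m * (exp (c * z) * ((u' n z) ^ 2 + (u n z) ^ 2))
      - (Set.Icc (-R) R).indicator (fun z => K * exp (c * z)) z))
      ≤ Ener c f (u n) (u' n) := by
    unfold Ener
    exact integral_mono hg (hint n) hle
  have hcomp : (∫ z, (m * (exp (c * z) * ((u' n z) ^ 2 + (u n z) ^ 2))
      - (Set.Icc (-R) R).indicator (fun z => K * exp (c * z)) z))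
      = m * (∫ z, exp (c * z) * ((u' n z) ^ 2 + (u n z) ^ 2)) - K * J := by
    rw [integral_sub (hI1.const_mul m) hIind, integral_const_mul,
      integral_indicator measurableSet_Icc, integral_const_mul]
  rw [hcomp] at hmono
  have hfinal : m * (∫ z, exp (c * z) * ((u' n z) ^ 2 + (u n z) ^ 2)) ≤ 1 + K * J := by
    linarith
  rw [le_div_iff₀ hm]
  linarith [hfinal]
end

section
/- Let c > 0, δ > 0, R > 0. Suppose w ∈ H^2(ℝ) ∩ C(ℝ) is nonnegative, bounded, satisfies −w'' − cw' ≤ −δw on (−∞,−R) ∪ (R,∞), and w(z) → 0 as z → ±∞. Let λ₋ < 0 < λ₊ be the two roots of λ² + cλ = δ. Then w(z) ≤ w(−R) e^{λ₊(z+R)} for all z ≤ −R, and w(z) ≤ w(R) e^{λ₋(z−R)} for all z ≥ R. -/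
open Real Filter

lemma barrier_right (c δ R : ℝ) (hδ : 0 < δ)
    (w w' w'' : ℝ → ℝ)
    (hd1 : ∀ z, HasDerivAt w (w' z) z)
    (hd2 : ∀ z, HasDerivAt w' (w'' z) z)
    (hbdd : ∃ B : ℝ, ∀ z, w z ≤ B)
    (hineq : ∀ z, R < z → δ * w z ≤ w'' z + c * w' z)
    (lm lp : ℝ) (hlm : lm < 0) (hlp : 0 < lp)
    (hrootm : lm ^ 2 + c * lm = δ) (hrootp : lp ^ 2 + c * lp = δ) :
    ∀ z, R ≤ z → w z ≤ w R * Real.exp (lm * (z - R)) := by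
  obtain ⟨B, hB⟩ := hbdd
  have hsum : lm + lp + c = 0 := by
    have h0 : (lm - lp) * (lm + lp + c) = 0 := by linear_combination hrootm - hrootp
    have hne : lm - lp ≠ 0 := by nlinarith
    exact (mul_eq_zero.1 h0).resolve_left hne
  have hc : c = -lm - lp := by linarith
  have hδ' : δ = -(lm * lp) := by linear_combination lm * hsum - hrootm
  have hs : 0 < lp - lm := by linarith
  -- derivative facts
  have hme : ∀ z : ℝ, HasDerivAt (fun z => Real.exp (lm * (R - z)))
      (-lm * Real.exp (lm * (R - z))) z := by
    intro z
    have h1 : HasDerivAt (fun z : ℝ => lm * (R - z)) (-lm) z := by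
      simpa using ((hasDerivAt_id z).const_sub R).const_mul lm
    simpa [mul_comm] using h1.exp
  set V : ℝ → ℝ := fun z => w z * Real.exp (lm * (R - z)) with hV_def
  set V' : ℝ → ℝ := fun z => (w' z - lm * w z) * Real.exp (lm * (R - z)) with hV'_def
  have hv : ∀ z, HasDerivAt V (V' z) z := by
    intro z
    have := (hd1 z).mul (hme z)
    refine this.congr_deriv ?_
    simp only [hV'_def]; ring
  have hv' : ∀ z, HasDerivAt V'
      ((w'' z - 2 * lm * w' z + lm ^ 2 * w z) * Real.exp (lm * (R - z))) z := by
    intro z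
    have := ((hd2 z).sub ((hd1 z).const_mul lm)).mul (hme z)
    refine this.congr_deriv ?_
    simp only [Pi.sub_apply]; ring
  set g : ℝ → ℝ := fun z => Real.exp ((lm - lp) * z) * V' z with hg_def
  have hgd : ∀ z, HasDerivAt g
      (Real.exp ((lm - lp) * z) * ((w'' z + c * w' z - δ * w z) * Real.exp (lm * (R - z)))) z := by
    intro z
    have he : HasDerivAt (fun z : ℝ => Real.exp ((lm - lp) * z))
        ((lm - lp) * Real.exp ((lm - lp) * z)) z := by
      simpa [mul_comm] using ((hasDerivAt_id z).const_mul (lm - lp)).exp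
    have := he.mul (hv' z)
    refine this.congr_deriv ?_
    simp only [hV'_def]
    rw [hc, hδ']; ring
  -- g is monotone on Ici R
  have hgmono : MonotoneOn g (Set.Ici R) := by
    apply monotoneOn_of_deriv_nonneg (convex_Ici R)
    · exact fun x _ => (hgd x).continuousAt.continuousWithinAt
    · exact fun x _ => (hgd x).differentiableAt.differentiableWithinAt
    · intro x hx
      rw [interior_Ici] at hx
      rw [(hgd x).deriv]
      have h1 : 0 ≤ w'' x + c * w' x - δ * w x := by
        have := hineq x hx; linarith
      positivity
  -- main claim : V' ≤ 0 on Ici R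
  have key : ∀ z, R ≤ z → V' z ≤ 0 := by
    by_contra hcon
    push_neg at hcon
    obtain ⟨z₀, hz₀R, hz₀⟩ := hcon
    set a : ℝ := Real.exp ((lm - lp) * z₀) * V' z₀ with ha_def
    have ha : 0 < a := mul_pos (Real.exp_pos _) hz₀
    -- V' z ≥ a * exp ((lp - lm) z) for z ≥ z₀
    have hVlb : ∀ z, z₀ ≤ z → a * Real.exp ((lp - lm) * z) ≤ V' z := by
      intro z hz
      have hg2 : a ≤ g z := hgmono (Set.mem_Ici.2 hz₀R) (Set.mem_Ici.2 (hz₀R.trans hz)) hz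
      have h4 : a * Real.exp ((lp - lm) * z) ≤ g z * Real.exp ((lp - lm) * z) :=
        mul_le_mul_of_nonneg_right hg2 (Real.exp_pos _).le
      calc a * Real.exp ((lp - lm) * z) ≤ g z * Real.exp ((lp - lm) * z) := h4
        _ = V' z := by
          simp only [hg_def]
          rw [mul_comm (Real.exp _) (V' z), mul_assoc, ← Real.exp_add,
            show (lm - lp) * z + (lp - lm) * z = 0 by ring, Real.exp_zero, mul_one]
    -- F := V - (a/(lp-lm)) exp((lp-lm) z) is monotone on Ici z₀
    set F : ℝ → ℝ := fun z => V z - a / (lp - lm) * Real.exp ((lp - lm) * z) with hF_def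
    have hFd : ∀ z, HasDerivAt F (V' z - a * Real.exp ((lp - lm) * z)) z := by
      intro z
      have he : HasDerivAt (fun z : ℝ => Real.exp ((lp - lm) * z))
          ((lp - lm) * Real.exp ((lp - lm) * z)) z := by
        simpa [mul_comm] using ((hasDerivAt_id z).const_mul (lp - lm)).exp
      have := (hv z).sub (he.const_mul (a / (lp - lm)))
      refine this.congr_deriv ?_
      field_simp
    have hFmono : MonotoneOn F (Set.Ici z₀) := by
      apply monotoneOn_of_deriv_nonneg (convex_Ici z₀)
      · exact fun x _ => (hFd x).continuousAt.continuousWithinAt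
      · exact fun x _ => (hFd x).differentiableAt.differentiableWithinAt
      · intro x hx
        rw [interior_Ici] at hx
        rw [(hFd x).deriv]
        have := hVlb x hx.le
        linarith
    -- so w z ≥ F z₀ exp(lm (z-R)) + (a/(lp-lm)) exp(-lm R) exp(lp z)
    have hwlb : ∀ z, z₀ ≤ z →
        F z₀ * Real.exp (lm * (z - R))
          + a / (lp - lm) * Real.exp (-(lm * R)) * Real.exp (lp * z) ≤ w z := by
      intro z hz
      have h1 : F z₀ ≤ F z := hFmono Set.self_mem_Ici (Set.mem_Ici.2 hz) hz
      have h2 : F z₀ + a / (lp - lm) * Real.exp ((lp - lm) * z) ≤ V z := by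
        simp only [hF_def] at h1 ⊢; linarith
      have h3 := mul_le_mul_of_nonneg_right h2 (Real.exp_pos (lm * (z - R))).le
      calc F z₀ * Real.exp (lm * (z - R))
            + a / (lp - lm) * Real.exp (-(lm * R)) * Real.exp (lp * z)
          = (F z₀ + a / (lp - lm) * Real.exp ((lp - lm) * z)) * Real.exp (lm * (z - R)) := by
            rw [add_mul, mul_assoc (a / (lp - lm)), ← Real.exp_add,
              mul_assoc (a / (lp - lm)), ← Real.exp_add]
            ring_nf
        _ ≤ V z * Real.exp (lm * (z - R)) := h3
        _ = w z := by
            simp only [hV_def]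
            rw [mul_assoc, ← Real.exp_add,
              show lm * (R - z) + lm * (z - R) = 0 by ring, Real.exp_zero, mul_one]
    -- the lower bound tends to +∞, contradiction with w ≤ B
    have hT : Tendsto (fun z => F z₀ * Real.exp (lm * (z - R))
        + a / (lp - lm) * Real.exp (-(lm * R)) * Real.exp (lp * z)) atTop atTop := by
      have h2 : Tendsto (fun z => a / (lp - lm) * Real.exp (-(lm * R)) * Real.exp (lp * z))
          atTop atTop := by
        apply Tendsto.const_mul_atTop (by positivity)
        exact Real.tendsto_exp_atTop.comp (tendsto_id.const_mul_atTop hlp)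
      have h1 : Tendsto (fun z => F z₀ * Real.exp (lm * (z - R))) atTop (nhds (F z₀ * 0)) := by
        apply Tendsto.const_mul
        apply Real.tendsto_exp_atBot.comp
        apply (tendsto_const_mul_atBot_of_neg hlm).2
        simpa [sub_eq_add_neg] using tendsto_atTop_add_const_right atTop (-R)
          (tendsto_id (α := ℝ))
      simpa using h1.add_atTop h2
    obtain ⟨z, hz1, hz2⟩ := ((hT.eventually_gt_atTop B).and (eventually_ge_atTop z₀)).exists
    have := hwlb z hz2
    have := hB z
    linarith
  -- V antitone on Ici R, conclude
  have hVanti : AntitoneOn V (Set.Ici R) := by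
    apply antitoneOn_of_deriv_nonpos (convex_Ici R)
    · exact fun x _ => (hv x).continuousAt.continuousWithinAt
    · exact fun x _ => (hv x).differentiableAt.differentiableWithinAt
    · intro x hx
      rw [interior_Ici] at hx
      rw [(hv x).deriv]
      exact key x hx.le
  intro z hz
  have h1 : V z ≤ V R := hVanti Set.self_mem_Ici (Set.mem_Ici.2 hz) hz
  have h2 : V R = w R := by simp [hV_def]
  have h3 := mul_le_mul_of_nonneg_right h1 (Real.exp_pos (lm * (z - R))).le
  rw [h2] at h3
  calc w z = V z * Real.exp (lm * (z - R)) := by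
        simp only [hV_def]
        rw [mul_assoc, ← Real.exp_add,
          show lm * (R - z) + lm * (z - R) = 0 by ring, Real.exp_zero, mul_one]
    _ ≤ w R * Real.exp (lm * (z - R)) := h3

/-- Exponential barrier estimate: a nonnegative bounded function satisfying
`−w'' − cw' ≤ −δw` outside `(−R,R)` and vanishing at `±∞` is dominated by the
explicit exponentials `w(−R)e^{λ₊(z+R)}` for `z ≤ −R` and `w(R)e^{λ₋(z−R)}` for `z ≥ R`,
where `λ₋ < 0 < λ₊` solve `λ² + cλ = δ`. -/
theorem exponential_barrier (c δ R : ℝ) (hc : 0 < c) (hδ : 0 < δ) (hR : 0 < R)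
    (w w' w'' : ℝ → ℝ)
    (hd1 : ∀ z, HasDerivAt w (w' z) z)
    (hd2 : ∀ z, HasDerivAt w' (w'' z) z)
    (hpos : ∀ z, 0 ≤ w z)
    (hbdd : ∃ B : ℝ, ∀ z, w z ≤ B)
    (hineq : ∀ z, R < |z| → -(w'' z) - c * w' z ≤ -δ * w z)
    (hlimtop : Tendsto w atTop (nhds 0))
    (hlimbot : Tendsto w atBot (nhds 0))
    (lm lp : ℝ) (hlm : lm < 0) (hlp : 0 < lp)
    (hrootm : lm ^ 2 + c * lm = δ) (hrootp : lp ^ 2 + c * lp = δ) :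
    (∀ z, z ≤ -R → w z ≤ w (-R) * exp (lp * (z + R))) ∧
    (∀ z, R ≤ z → w z ≤ w R * exp (lm * (z - R))) := by

  constructor
  · -- left side via reflection
    have hd1W : ∀ z, HasDerivAt (fun z => w (-z)) (-(w' (-z))) z := by
      intro z
      simpa [Function.comp_def] using (hd1 (-z)).comp z (hasDerivAt_neg z)
    have hd2W : ∀ z, HasDerivAt (fun z => -(w' (-z))) (w'' (-z)) z := by
      intro z
      have := ((hd2 (-z)).comp z (hasDerivAt_neg z)).neg
      simpa [Function.comp_def, Pi.neg_def] using this
    have hbddW : ∃ B : ℝ, ∀ z, w (-z) ≤ B := by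
      obtain ⟨B, hB⟩ := hbdd; exact ⟨B, fun z => hB (-z)⟩
    have hineqW : ∀ z, R < z → δ * w (-z) ≤ w'' (-z) + (-c) * (-(w' (-z))) := by
      intro z hz
      have habs : R < |(-z)| := by
        rw [abs_neg, abs_of_pos (hR.trans hz)]; exact hz
      have := hineq (-z) habs
      nlinarith
    have key := barrier_right (-c) δ R hδ (fun z => w (-z)) (fun z => -(w' (-z)))
      (fun z => w'' (-z)) hd1W hd2W hbddW hineqW (-lp) (-lm)
      (by linarith) (by linarith) (by linarith [hrootp]) (by linarith [hrootm])
    intro z hz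
    have h1 : R ≤ -z := by linarith
    have := key (-z) h1
    simpa [show -lp * (-z - R) = lp * (z + R) by ring] using this
  · -- right side
    have hineq' : ∀ z, R < z → δ * w z ≤ w'' z + c * w' z := by
      intro z hz
      have habs : R < |z| := lt_of_lt_of_le hz (le_abs_self z)
      have := hineq z habs
      linarith
    exact barrier_right c δ R hδ w w' w'' hd1 hd2 hbdd hineq' lm lp hlm hlp hrootm hrootp
end
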